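/- Let p be an odd prime, n ≥ 2, and q = p^n. Let r be an integer with 2 ≤ r ≤ p−1, and let d be a positive integer with d < q−1 such that d ≡ r (mod p−1) and every base-p digit d_i of d (for i = 0, 1, ..., n−1, where d = Σ_{i=0}^{n−1} d_i·p^i with 0 ≤ d_i ≤ p−1) satisfies d_i ≥ r. Then there exists an integer e with 1 ≤ e ≤ q−1 such that s_p(e ⋆ d) − s_p(e) > n(p−1)/2. -/

import Mathlib

/-- Base-`p` digit sum. -/
def sp (p e : ℕ) : ℕ := (Nat.digits p e).sum

/-- The operation `⋆` on `{0, 1, …, q - 1}`: `e ⋆ d = 0` if `e = 0` or `d = 0`, and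
otherwise `e ⋆ d` is the unique `r` with `1 ≤ r ≤ q - 1` and `r ≡ e * d (mod q - 1)`. -/
def star (q e d : ℕ) : ℕ :=
  if e = 0 ∨ d = 0 then 0
  else if (e * d) % (q - 1) = 0 then q - 1 else (e * d) % (q - 1)

lemma sp_step {p : ℕ} (hp : 1 < p) (c x : ℕ) (hc : c < p) :
    sp p (c + p * x) = c + sp p x := by
  rcases Nat.eq_zero_or_pos (c + p * x) with h0 | hpos
  · have hc0 : c = 0 := by omega
    have hx0 : x = 0 := by
      rcases Nat.mul_eq_zero.mp (by omega : p * x = 0) with h | h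
      · omega
      · exact h
    subst hc0; subst hx0; simp [sp]
  · unfold sp
    rw [Nat.digits_def' hp hpos, List.sum_cons]
    congr 1
    · rw [Nat.add_mul_mod_self_left, Nat.mod_eq_of_lt hc]
    · congr 1
      rw [Nat.add_mul_div_left _ _ (by omega : 0 < p), Nat.div_eq_of_lt hc, zero_add]

lemma sp_sum {p : ℕ} (hp : 1 < p) :
    ∀ (n : ℕ) (c : Fin n → ℕ), (∀ i, c i < p) →
      sp p (∑ i, c i * p ^ (i : ℕ)) = ∑ i, c i := by
  intro n
  induction n with
  | zero => intro c _; simp [sp]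
  | succ t ih =>
    intro c h
    have h1 : ∑ i : Fin (t+1), c i * p ^ (i : ℕ)
        = c 0 + p * ∑ i : Fin t, c i.succ * p ^ (i : ℕ) := by
      rw [Fin.sum_univ_succ]
      simp only [Fin.val_zero, pow_zero, mul_one, Fin.val_succ]
      congr 1
      rw [Finset.mul_sum]
      apply Finset.sum_congr rfl
      intro i _
      rw [pow_succ]; ring
    rw [h1, sp_step hp _ _ (h 0), ih _ (fun i => h i.succ), Fin.sum_univ_succ]

theorem stmt13 (p n : ℕ) (hp : p.Prime) (hodd : Odd p) (hn : 2 ≤ n)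
    (r : ℕ) (hr1 : 2 ≤ r) (hr2 : r ≤ p - 1)
    (d : ℕ) (hd0 : 0 < d) (hdlt : d < p ^ n - 1) (hmod : d ≡ r [MOD p - 1])
    (dig : Fin n → ℕ) (hdig : ∀ i, dig i ≤ p - 1)
    (hsum : d = ∑ i : Fin n, dig i * p ^ (i : ℕ)) (hge : ∀ i, r ≤ dig i) :
    ∃ e : ℕ, 1 ≤ e ∧ e ≤ p ^ n - 1 ∧
      sp p e + n * (p - 1) / 2 < sp p (star (p ^ n) e d) := by
  obtain ⟨k, rfl⟩ : ∃ k, n = k + 2 := ⟨n - 2, by omega⟩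
  have hp1 : 1 < p := hp.one_lt
  have hp2 : p ≠ 2 := by rintro rfl; exact (by decide : ¬ Odd 2) hodd
  obtain ⟨h, hph⟩ := hodd
  have hh1 : 1 ≤ h := by omega
  have hm : p - 1 = 2 * h := by omega
  have hM : (k + 2) * (p - 1) / 2 = (k + 2) * h := by
    rw [hm, show (k+2) * (2*h) = 2 * ((k+2)*h) by ring,
      Nat.mul_div_cancel_left _ (by norm_num)]
  -- geometric sum
  set u := ∑ i : Fin (k + 2), p ^ (i : ℕ) with hu
  have hgeo : ∀ N : ℕ, (p - 1) * (∑ i ∈ Finset.range N, p ^ i) + 1 = p ^ N := by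
    intro N
    induction N with
    | zero => simp
    | succ t ih =>
      rw [Finset.sum_range_succ, Nat.mul_add]
      calc (p-1) * (∑ i ∈ Finset.range t, p^i) + (p-1) * p^t + 1
          = ((p-1) * (∑ i ∈ Finset.range t, p^i) + 1) + (p-1) * p^t := by ring
        _ = p ^ t + (p-1) * p^t := by rw [ih]
        _ = ((p-1) + 1) * p ^ t := by ring
        _ = p ^ (t+1) := by rw [show p - 1 + 1 = p from by omega, pow_succ]; ring
  have hmu : (p - 1) * u + 1 = p ^ (k + 2) := by
    rw [hu, Fin.sum_univ_eq_sum_range]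
    exact hgeo (k + 2)
  have hq1 : p ^ (k + 2) - 1 = (p - 1) * u := by omega
  set S := ∑ i : Fin (k + 2), dig i with hS
  have hdig' : ∀ i, dig i < p := fun i => by have := hdig i; omega
  have hspd : sp p d = S := by rw [hsum, hS]; exact sp_sum hp1 _ dig hdig'
  have hsp1 : sp p 1 = 1 := by
    have h' := sp_step hp1 1 0 (by omega)
    simpa [sp] using h'
  -- d ≥ 2p
  have hd2p : 2 * p ≤ d := by
    have h1 : dig ⟨1, by omega⟩ * p ^ ((⟨1, by omega⟩ : Fin (k+2)) : ℕ)
        ≤ ∑ i : Fin (k+2), dig i * p ^ (i : ℕ) :=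
      Finset.single_le_sum (f := fun i : Fin (k+2) => dig i * p ^ (i : ℕ))
        (fun i _ => Nat.zero_le _) (Finset.mem_univ _)
    have h2 : 2 * p ≤ dig ⟨1, by omega⟩ * p ^ ((⟨1, by omega⟩ : Fin (k+2)) : ℕ) := by
      have h3 := hge ⟨1, by omega⟩
      calc 2 * p ≤ dig ⟨1, by omega⟩ * p := by
            exact Nat.mul_le_mul_right p (by omega)
        _ = dig ⟨1, by omega⟩ * p ^ ((⟨1, by omega⟩ : Fin (k+2)) : ℕ) := by norm_num
    omega
  have hq2 : 2 ≤ p ^ (k + 2) := by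
    calc 2 ≤ p := by omega
      _ = p ^ 1 := (pow_one p).symm
      _ ≤ p ^ (k + 2) := Nat.pow_le_pow_right (by omega) (by omega)
  by_cases hcase : (k + 2) * h + 2 ≤ S
  · -- e = 1
    refine ⟨1, le_refl 1, by omega, ?_⟩
    have hne : ¬((1 : ℕ) = 0 ∨ d = 0) := by rintro (h1 | h1) <;> omega
    have hmodd : (1 * d) % (p ^ (k+2) - 1) = d := by
      rw [one_mul, Nat.mod_eq_of_lt hdlt]
    have hstar : star (p ^ (k+2)) 1 d = d := by
      unfold _root_.star
      rw [if_neg hne, hmodd, if_neg (by omega)]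
    rw [hstar, hM, hsp1, hspd]
    omega
  · -- e = u - 1
    have hup : p ≤ u := by
      have h1 : p ^ ((⟨1, by omega⟩ : Fin (k+2)) : ℕ) ≤ u :=
        Finset.single_le_sum (f := fun i : Fin (k+2) => p ^ (i : ℕ))
          (fun i _ => Nat.zero_le _) (Finset.mem_univ _)
      simpa using h1
    set e := u - 1 with he
    have he2 : 2 ≤ e := by omega
    -- digits of e
    have hedig : e = ∑ i : Fin (k+2), (if (i : ℕ) = 0 then 0 else 1) * p ^ (i : ℕ) := by
      have h1 : (∑ i : Fin (k+2), (if (i : ℕ) = 0 then 0 else 1) * p ^ (i : ℕ)) + 1 = u := by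
        rw [hu, Fin.sum_univ_succ, Fin.sum_univ_succ (f := fun i : Fin (k+2) => p ^ (i : ℕ))]
        simp [Fin.val_succ, add_comm]
      omega
    have hspe : sp p e = k + 1 := by
      rw [hedig, sp_sum hp1 _ _ (fun i => by split <;> omega)]
      rw [Fin.sum_univ_succ]
      simp
    -- decompose d = r + (p-1)*(l'+1)
    have hrd : r ≤ d := by omega
    obtain ⟨l, hl⟩ := (Nat.modEq_iff_dvd' hrd).mp hmod.symm
    have hl1 : 1 ≤ l := by
      rcases Nat.eq_zero_or_pos l with rfl | hpos
      · rw [Nat.mul_zero] at hl; omega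
      · exact hpos
    obtain ⟨l', rfl⟩ : ∃ l', l = l' + 1 := ⟨l - 1, by omega⟩
    have hd_eq : d = r + (p - 1) * (l' + 1) := by omega
    -- X
    set X := ∑ i : Fin (k+2), (r + (p - 1 - dig i)) * p ^ (i : ℕ) with hX
    have hcd : ∀ i : Fin (k+2), r + (p - 1 - dig i) ≤ p - 1 := fun i => by
      have := hge i; have := hdig i; omega
    have hspX : sp p X = ∑ i : Fin (k+2), (r + (p - 1 - dig i)) := by
      rw [hX]; exact sp_sum hp1 _ _ (fun i => by have := hcd i; omega)
    have hXle : X ≤ (p - 1) * u := by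
      rw [hX, hu, Finset.mul_sum]
      exact Finset.sum_le_sum (fun i _ => Nat.mul_le_mul_right _ (hcd i))
    have hXpos : 0 < X := by
      have h1 : (r + (p - 1 - dig ⟨0, by omega⟩)) * p ^ ((⟨0, by omega⟩ : Fin (k+2)) : ℕ) ≤ X := by
        rw [hX]
        exact Finset.single_le_sum (f := fun i : Fin (k+2) => (r + (p - 1 - dig i)) * p ^ (i : ℕ))
          (fun i _ => Nat.zero_le _) (Finset.mem_univ _)
      have h2 : 0 < (r + (p - 1 - dig ⟨0, by omega⟩)) * p ^ ((⟨0, by omega⟩ : Fin (k+2)) : ℕ) := by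
        apply Nat.mul_pos (by omega)
        exact Nat.pow_pos (by omega)
      omega
    have hXd : X + d = r * u + (p - 1) * u := by
      rw [hX, hsum, hu, ← Finset.sum_add_distrib, Finset.mul_sum, Finset.mul_sum,
        ← Finset.sum_add_distrib]
      apply Finset.sum_congr rfl
      intro i _
      have h1 := hge i; have h2 := hdig i
      calc (r + (p - 1 - dig i)) * p ^ (i : ℕ) + dig i * p ^ (i : ℕ)
          = ((r + (p - 1 - dig i)) + dig i) * p ^ (i : ℕ) := by ring
        _ = (r + (p - 1)) * p ^ (i : ℕ) := by congr 1; omega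
        _ = r * p ^ (i : ℕ) + (p - 1) * p ^ (i : ℕ) := by ring
    have hed1 : e * d + d = u * d := by
      have h1 : u - 1 + 1 = u := by omega
      calc e * d + d = ((u - 1) + 1) * d := by rw [he]; ring
        _ = u * d := by rw [h1]
    have hed2 : u * d = (r * u + (p - 1) * u) + (p ^ (k+2) - 1) * l' := by
      rw [hd_eq, hq1]
      ring
    have hkey : e * d = X + (p ^ (k+2) - 1) * l' := by omega
    have hmod2 : (e * d) % (p ^ (k+2) - 1) = X % (p ^ (k+2) - 1) := by
      rw [hkey, Nat.add_mul_mod_self_left]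
    have hene : ¬(e = 0 ∨ d = 0) := by rintro (h1 | h1) <;> omega
    have hble : (k+2) * 2 ≤ (k+2) * r := Nat.mul_le_mul_left _ hr1
    have hble2 : (k+2) * 1 ≤ (k+2) * h := Nat.mul_le_mul_left _ hh1
    have hb1 : (k+2) * (p - 1) = 2 * ((k+2) * h) := by rw [hm]; ring
    have heub : u ≤ (p - 1) * u := Nat.le_mul_of_pos_left _ (by omega)
    refine ⟨e, by omega, by omega, ?_⟩
    by_cases hXq : X = p ^ (k+2) - 1
    · have hstar : star (p ^ (k+2)) e d = p ^ (k+2) - 1 := by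
        unfold _root_.star
        rw [if_neg hene, hmod2, hXq, Nat.mod_self, if_pos rfl]
      have hq_digits : sp p (p ^ (k+2) - 1) = (k+2) * (p - 1) := by
        have h1 : (p - 1) * u = ∑ i : Fin (k+2), (p - 1) * p ^ (i : ℕ) := by
          rw [hu, Finset.mul_sum]
        rw [hq1, h1, sp_sum hp1 _ _ (fun i => by omega)]
        simp [Finset.sum_const, mul_comm]
      rw [hstar, hM, hspe, hq_digits]
      omega
    · have hXlt : X < p ^ (k+2) - 1 := by omega
      have hstar : star (p ^ (k+2)) e d = X := by
        unfold _root_.star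
        rw [if_neg hene, hmod2, Nat.mod_eq_of_lt hXlt, if_neg (by omega)]
      have hsplit : ∑ i : Fin (k+2), (r + (p - 1 - dig i))
          = (k+2) * r + ∑ i : Fin (k+2), (p - 1 - dig i) := by
        rw [Finset.sum_add_distrib, Finset.sum_const, Finset.card_univ,
          Fintype.card_fin, smul_eq_mul]
      have hTS : (∑ i : Fin (k+2), (p - 1 - dig i)) + S = (k+2) * (p - 1) := by
        rw [hS, ← Finset.sum_add_distrib]
        have h1 : ∀ i : Fin (k+2), (p - 1 - dig i) + dig i = p - 1 := fun i => by
          have := hdig i; omega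
        rw [Finset.sum_congr rfl (fun i _ => h1 i)]
        simp [Finset.sum_const, mul_comm]
      rw [hstar, hM, hspe, hspX, hsplit]
      omega
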